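/- Given parameters π, τ, m > 0, γ > σ > 0 and Λ = (γ/(γ-σ))^{1/σ}, define the developer payoff Π(q) = π q^σ/(m_s q̄^σ) with q̄ = Λ q₀ and m_s = m q₀^{-γ}. Then the indifference condition Π(q₀) = τ has the unique positive solution q₀ = (τ m Λ^σ/π)^{1/γ}, and consequently m_s = π/(τ Λ^σ), which is independent of m. -/

import Mathlib

/-- The sharing indifference condition Π(q₀) = τ, where
Π(q) = π q^σ/(m_s q̄^σ) with q̄ = Λ q₀ and m_s = m q₀^{-γ}, has the unique
positive solution q₀ = (τ m Λ^σ/π)^{1/γ}, and then m_s = π/(τ Λ^σ),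
independent of m. -/
theorem sharing_cutoff (π τ m γ σ : ℝ) (hπ : 0 < π) (hτ : 0 < τ) (hm : 0 < m)
    (hσ : 0 < σ) (hγσ : σ < γ) :
    let Λ : ℝ := (γ / (γ - σ)) ^ (1 / σ)
    let q₀ : ℝ := (τ * m * Λ ^ σ / π) ^ (1 / γ)
    (0 < q₀ ∧ π * q₀ ^ σ / (m * q₀ ^ (-γ) * (Λ * q₀) ^ σ) = τ) ∧
    (∀ x : ℝ, 0 < x → π * x ^ σ / (m * x ^ (-γ) * (Λ * x) ^ σ) = τ → x = q₀) ∧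
    m * q₀ ^ (-γ) = π / (τ * Λ ^ σ) := by
  intro Λ q₀
  have hγ : (0:ℝ) < γ := hσ.trans hγσ
  have hΛ : 0 < Λ := Real.rpow_pos_of_pos (div_pos hγ (sub_pos.2 hγσ)) _
  have hΛσ : 0 < Λ ^ σ := Real.rpow_pos_of_pos hΛ _
  have hC : 0 < τ * m * Λ ^ σ / π := div_pos (mul_pos (mul_pos hτ hm) hΛσ) hπ
  have hq₀ : 0 < q₀ := Real.rpow_pos_of_pos hC _
  have hq₀γ : q₀ ^ γ = τ * m * Λ ^ σ / π := by
    show ((τ * m * Λ ^ σ / π) ^ (1/γ)) ^ γ = _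
    rw [one_div, Real.rpow_inv_rpow hC.le hγ.ne']
  clear_value q₀ Λ
  have key : ∀ x : ℝ, 0 < x →
      (π * x ^ σ / (m * x ^ (-γ) * (Λ * x) ^ σ) = τ ↔ x ^ γ = τ * m * Λ ^ σ / π) := by
    intro x hx
    have hxσ : 0 < x ^ σ := Real.rpow_pos_of_pos hx _
    have hxγ : 0 < x ^ γ := Real.rpow_pos_of_pos hx _
    rw [Real.mul_rpow hΛ.le hx.le, Real.rpow_neg hx.le]
    have lhs : π * x ^ σ / (m * (x ^ γ)⁻¹ * (Λ ^ σ * x ^ σ)) = π * x ^ γ / (m * Λ ^ σ) := by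
      rw [div_eq_div_iff (by positivity) (by positivity)]
      field_simp
    rw [lhs, div_eq_iff (mul_pos hm hΛσ).ne', eq_div_iff hπ.ne']
    constructor <;> intro h <;> linear_combination h
  refine ⟨⟨hq₀, (key q₀ hq₀).2 hq₀γ⟩, ?_, ?_⟩
  · intro x hx hxeq
    have hx' := (key x hx).1 hxeq
    exact (Real.rpow_left_inj hx.le hq₀.le hγ.ne').1 (by rw [hx', hq₀γ])
  · rw [Real.rpow_neg hq₀.le, hq₀γ]
    field_simp
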